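/- arXiv:2010.04538 — 2 statements merged into one kernel-verified Lean document; each statement's English description precedes it below -/
import Mathlib

section
/- Let K be a p×q complex matrix and e an index in Fin q. Then the following are equivalent: (1) every vector δ in the kernel of K has δ_e = 0; (2) the e-th standard basis vector e_e is orthogonal to ker K (i.e., ⟨δ, e_e⟩ = 0 for all δ ∈ ker K); (3) the e-th column of K does not lie in the span of the other columns, equivalently rank K = rank K' + 1 where K' is K with the e-th column removed. -/
open Matrix

/-- Equivalent characterizations of "every kernel vector of `K` has zero `e`-th entry":
orthogonality of the kernel to the `e`-th standard basis vector, the `e`-th column not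
lying in the span of the other columns, and the rank condition `rank K = rank K' + 1`. -/
theorem stmt4 {p q : ℕ} (K : Matrix (Fin p) (Fin q) ℂ) (e : Fin q) :
    ((∀ δ : Fin q → ℂ, K.mulVec δ = 0 → δ e = 0) ↔
      (∀ δ : Fin q → ℂ, K.mulVec δ = 0 → star δ ⬝ᵥ (Pi.single e 1 : Fin q → ℂ) = 0)) ∧
    ((∀ δ : Fin q → ℂ, K.mulVec δ = 0 → δ e = 0) ↔
      (fun i => K i e) ∉
        Submodule.span ℂ (Set.range fun j : {j : Fin q // j ≠ e} => fun i => K i (j : Fin q))) ∧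
    ((∀ δ : Fin q → ℂ, K.mulVec δ = 0 → δ e = 0) ↔
      K.rank = (K.submatrix id (fun j : {j : Fin q // j ≠ e} => (j : Fin q))).rank + 1) := by
  classical
  set v : Fin p → ℂ := fun i => K i e with hv
  set S : Submodule ℂ (Fin p → ℂ) :=
    Submodule.span ℂ (Set.range fun j : {j : Fin q // j ≠ e} => fun i => K i (j : Fin q)) with hS
  -- column sum formula
  have hcol : ∀ δ : Fin q → ℂ, K.mulVec δ = ∑ j, δ j • (fun i => K i j) := by
    intro δ
    funext i
    simp [Matrix.mulVec, dotProduct, mul_comm]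
  have hmemS : ∀ j : Fin q, j ≠ e → (fun i => K i j) ∈ S := by
    intro j hj
    exact Submodule.subset_span ⟨⟨j, hj⟩, rfl⟩
  -- key iff: kernel condition ↔ v ∉ S
  have key : (∀ δ : Fin q → ℂ, K.mulVec δ = 0 → δ e = 0) ↔ v ∉ S := by
    constructor
    · intro h hvS
      rw [hS, Submodule.mem_span_range_iff_exists_fun] at hvS
      obtain ⟨c, hc⟩ := hvS
      set δ : Fin q → ℂ := fun j => if hj : j = e then -1 else c ⟨j, hj⟩ with hδ
      have hker : K.mulVec δ = 0 := by
        rw [hcol]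
        rw [Finset.sum_eq_add_sum_sdiff_singleton_of_mem (Finset.mem_univ e)
          (fun j => δ j • (fun i => K i j))]
        have h1 : δ e = -1 := by simp [hδ]
        have h2 : ∑ j ∈ Finset.univ \ {e}, δ j • (fun i => K i j) = v := by
          rw [← hc]
          apply Finset.sum_bij' (i := fun j hj => (⟨j, by simpa using hj⟩ : {j : Fin q // j ≠ e}))
            (j := fun a _ => (a : Fin q))
          case hi => intro a ha; simp
          case hj => intro a ha; simp [a.2]
          case left_neg => intro a ha; rfl
          case right_neg => intro a ha; rfl
          case h =>
            intro a ha
            have hane : a ≠ e := by simpa using ha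
            simp only [hδ]
            rw [dif_neg hane]
        rw [h1, h2]
        simp [hv]
      have := h δ hker
      simp [hδ] at this
    · intro hvS δ hker
      by_contra he
      apply hvS
      have hsum : δ e • v + ∑ j ∈ Finset.univ \ {e}, δ j • (fun i => K i j) = 0 := by
        rw [← Finset.sum_eq_add_sum_sdiff_singleton_of_mem (Finset.mem_univ e)
          (fun j => δ j • (fun i => K i j)), ← hcol, hker]
      have hrest : (∑ j ∈ Finset.univ \ {e}, δ j • (fun i => K i j)) ∈ S := by
        apply Submodule.sum_mem
        intro j hj
        have : j ≠ e := by simpa [Finset.mem_sdiff] using hj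
        exact Submodule.smul_mem _ _ (hmemS j this)
      have : δ e • v ∈ S := by
        have : δ e • v = -(∑ j ∈ Finset.univ \ {e}, δ j • (fun i => K i j)) := by
          rw [eq_neg_iff_add_eq_zero]; exact hsum
        rw [this]
        exact Submodule.neg_mem _ hrest
      have := Submodule.smul_mem S (δ e)⁻¹ this
      rwa [smul_smul, inv_mul_cancel₀ he, one_smul] at this
  refine ⟨?_, key, key.trans ?_⟩
  · constructor
    · intro h δ hδ
      simp [dotProduct, Pi.single_apply, h δ hδ]
    · intro h δ hδ
      have := h δ hδ
      simp [dotProduct, Pi.single_apply] at this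
      simpa using congrArg (starRingEnd ℂ) this
  · -- v ∉ S ↔ rank K = rank K' + 1
    have hrankK : K.rank = Module.finrank ℂ ↥(S ⊔ (ℂ ∙ v)) := by
      rw [Matrix.rank_eq_finrank_span_cols]
      have hspan : Submodule.span ℂ (Set.range Kᵀ) = S ⊔ (ℂ ∙ v) := by
        apply le_antisymm
        · rw [Submodule.span_le]
          rintro _ ⟨j, rfl⟩
          by_cases hj : j = e
          · subst hj
            exact Submodule.mem_sup_right (Submodule.mem_span_singleton_self v)
          · exact Submodule.mem_sup_left (hmemS j hj)
        · apply sup_le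
          · rw [hS, Submodule.span_le]
            rintro _ ⟨j, rfl⟩
            exact Submodule.subset_span ⟨j.1, rfl⟩
          · rw [Submodule.span_le, Set.singleton_subset_iff]
            exact Submodule.subset_span ⟨e, rfl⟩
      rw [show Set.range K.col = Set.range Kᵀ from rfl, hspan]
    have hrankK' : (K.submatrix id (fun j : {j : Fin q // j ≠ e} => (j : Fin q))).rank =
        Module.finrank ℂ S := by
      rw [Matrix.rank_eq_finrank_span_cols]
      rfl
    rw [hrankK, hrankK']
    constructor
    · intro hvS
      have hvne : v ≠ 0 := fun h => hvS (h ▸ S.zero_mem)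
      have hinf : S ⊓ (ℂ ∙ v) = ⊥ := by
        rw [eq_bot_iff]
        rintro x ⟨hxS, hxv⟩
        obtain ⟨c, rfl⟩ := Submodule.mem_span_singleton.mp hxv
        rcases eq_or_ne c 0 with rfl | hc
        · simp
        · exfalso
          apply hvS
          have := Submodule.smul_mem S c⁻¹ hxS
          rwa [smul_smul, inv_mul_cancel₀ hc, one_smul] at this
      have := Submodule.finrank_sup_add_finrank_inf_eq S (ℂ ∙ v)
      rw [hinf, finrank_span_singleton hvne] at this
      simpa using this
    · intro hrank hvS
      have : S ⊔ (ℂ ∙ v) = S := by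
        rw [sup_eq_left, Submodule.span_le, Set.singleton_subset_iff]
        exact hvS
      rw [this] at hrank
      omega
end

section
/- Let A : ℂ^N → Matrix (Fin p) (Fin q) ℂ have entries that are analytic functions on a connected open set U ⊆ ℂ^N, and let r be the maximum of rank A(x) over x ∈ U. Then the set {x ∈ U | rank A(x) < r} is closed in U and has empty interior (i.e., the generic rank r is attained on an open dense subset of U). -/
open Matrix

section Aux

variable {K : Type*} [Field K]

/-- From a family whose span has finrank at least `r`, extract `r` linearly independent
members. -/
lemma aux_exists_subfamily {V : Type*} [AddCommGroup V] [Module K V] {q r : ℕ}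
    (v : Fin q → V) (h : r ≤ Module.finrank K (Submodule.span K (Set.range v))) :
    ∃ g : Fin r → Fin q, LinearIndependent K (v ∘ g) := by
  classical
  obtain ⟨s, hsub, hspan, hind⟩ := exists_linearIndependent K (Set.range v)
  have hsfin : s.Finite := (Set.finite_range v).subset hsub
  haveI : Fintype s := hsfin.fintype
  have hcard : Fintype.card s = Module.finrank K (Submodule.span K s) := by
    have := linearIndependent_iff_card_eq_finrank_span.mp hind
    rwa [Set.finrank, Subtype.range_coe] at this
  have hrs : r ≤ Fintype.card s := by
    rw [hcard, hspan]; exact h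
  let e : Fin r ↪ s := (Fin.castLEEmb hrs).trans (Fintype.equivFin s).symm.toEmbedding
  choose g hg using fun i : Fin r => hsub (e i).2
  refine ⟨g, ?_⟩
  have hvg : v ∘ g = (fun x : s => (x : V)) ∘ e := by
    funext i; simp [Function.comp, hg i]
  rw [hvg]
  exact hind.comp e e.injective

lemma aux_det_ne_zero_of_rows {r : ℕ} {M : Matrix (Fin r) (Fin r) K}
    (h : LinearIndependent K M) : M.det ≠ 0 := by
  classical
  intro hdet
  have hdet' : Mᵀ.det = 0 := by rwa [Matrix.det_transpose]
  obtain ⟨v, hv, hmv⟩ := (Matrix.exists_mulVec_eq_zero_iff).mpr hdet'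
  have : ∑ i, v i • M i = 0 := by
    funext j
    have := congrFun hmv j
    simpa [Matrix.mulVec, dotProduct, Matrix.transpose_apply, mul_comm,
      Finset.sum_apply] using this
  exact hv (funext fun i => Fintype.linearIndependent_iff.mp h v this i)

/-- If some `r × r` minor of `M` is nonzero, then `r ≤ M.rank`. -/
lemma aux_rank_ge_of_minor {p q r : ℕ} (M : Matrix (Fin p) (Fin q) K)
    (f : Fin r → Fin p) (g : Fin r → Fin q) (h : (M.submatrix f g).det ≠ 0) :
    r ≤ M.rank := by
  classical
  have hfac : M.submatrix f g =
      ((1 : Matrix (Fin p) (Fin p) K).submatrix f id) * M *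
      ((1 : Matrix (Fin q) (Fin q) K).submatrix id g) := by
    ext i j
    simp [Matrix.mul_apply, Matrix.one_apply, Finset.sum_ite_eq, Finset.sum_ite_eq']
  have h1 : (M.submatrix f g).rank = r := by
    rw [Matrix.rank_of_isUnit _ ((Matrix.isUnit_iff_isUnit_det _).2
      (isUnit_iff_ne_zero.2 h)), Fintype.card_fin]
  calc r = (M.submatrix f g).rank := h1.symm
    _ ≤ M.rank := by
        rw [hfac]
        exact le_trans (Matrix.rank_mul_le_left _ _) (Matrix.rank_mul_le_right _ _)

/-- If `r ≤ M.rank`, there is a nonzero `r × r` minor. -/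
lemma aux_exists_minor {p q r : ℕ} (M : Matrix (Fin p) (Fin q) K)
    (h : r ≤ M.rank) :
    ∃ (f : Fin r → Fin p) (g : Fin r → Fin q), (M.submatrix f g).det ≠ 0 := by
  classical
  rw [Matrix.rank_eq_finrank_span_cols] at h
  obtain ⟨g, hg⟩ := aux_exists_subfamily Mᵀ h
  set M1 : Matrix (Fin p) (Fin r) K := M.submatrix id g with hM1
  have hM1t : M1ᵀ = Mᵀ ∘ g := by
    funext i j; simp [hM1]; rfl
  have hr1 : r ≤ M1.rank := by
    have : M1ᵀ.rank = r := by
      rw [hM1t]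
      have h' := hg.rank_matrix
      simp at h'
      exact h'
    rw [← Matrix.rank_transpose, this]
  rw [Matrix.rank_eq_finrank_span_row] at hr1
  obtain ⟨f, hf⟩ := aux_exists_subfamily M1 hr1
  refine ⟨f, g, ?_⟩
  have hsub : M.submatrix f g = M1 ∘ f := by
    funext i j; simp [hM1]; rfl
  exact aux_det_ne_zero_of_rows (by rw [hsub]; exact hf)

/-- Rank drops below `r` iff every `r × r` minor vanishes. -/
lemma aux_rank_lt_iff {p q r : ℕ} (M : Matrix (Fin p) (Fin q) K) :
    M.rank < r ↔ ∀ (f : Fin r → Fin p) (g : Fin r → Fin q),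
      (M.submatrix f g).det = 0 := by
  constructor
  · intro h f g
    by_contra hd
    exact absurd (aux_rank_ge_of_minor M f g hd) (not_le.mpr h)
  · intro h
    by_contra hlt
    obtain ⟨f, g, hd⟩ := aux_exists_minor M (not_lt.mp hlt)
    exact hd (h f g)

end Aux

/-- For an entrywise-analytic matrix function `A` on a connected open `U ⊆ ℂ^N` whose
rank attains its maximum `r` on `U`, the set where the rank drops below `r` is closed
in `U` and has empty interior. -/
theorem stmt9 {N p q : ℕ} (A : (Fin N → ℂ) → Matrix (Fin p) (Fin q) ℂ)
    (U : Set (Fin N → ℂ)) (hU : IsOpen U) (hUc : IsConnected U)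
    (hA : ∀ i j, AnalyticOnNhd ℂ (fun x => A x i j) U)
    (r : ℕ) (hr : ∀ x ∈ U, (A x).rank ≤ r) (hmax : ∃ x ∈ U, (A x).rank = r) :
    IsClosed ((Subtype.val ⁻¹' {x | (A x).rank < r}) : Set U) ∧
    interior {x | x ∈ U ∧ (A x).rank < r} = ∅ := by
  classical
  -- analyticity of minors
  have hminor : ∀ (f : Fin r → Fin p) (g : Fin r → Fin q),
      AnalyticOnNhd ℂ (fun x => ((A x).submatrix f g).det) U := by
    intro f g
    have heq : (fun x => ((A x).submatrix f g).det) =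
        fun x => ∑ σ : Equiv.Perm (Fin r),
          ((Equiv.Perm.sign σ : ℤ) : ℂ) * ∏ i, A x (f (σ i)) (g i) := by
      funext x
      rw [Matrix.det_apply]
      simp [Matrix.submatrix_apply, Units.smul_def, zsmul_eq_mul]
    rw [heq]
    have h := Finset.analyticOnNhd_sum (𝕜 := ℂ) (s := U) (f := fun (σ : Equiv.Perm (Fin r)) x =>
        ((Equiv.Perm.sign σ : ℤ) : ℂ) * ∏ i, A x (f (σ i)) (g i)) Finset.univ fun σ _ =>
      (analyticOnNhd_const).mul
        (Finset.analyticOnNhd_fun_prod Finset.univ fun i _ => hA (f (σ i)) (g i))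
    rw [Finset.sum_fn] at h
    exact h
  constructor
  · -- closedness
    have hset : ((Subtype.val ⁻¹' {x | (A x).rank < r}) : Set U) =
        ⋂ (f : Fin r → Fin p), ⋂ (g : Fin r → Fin q),
          {x : U | ((A (x : Fin N → ℂ)).submatrix f g).det = 0} := by
      ext x
      simp only [Set.mem_preimage, Set.mem_setOf_eq, Set.mem_iInter]
      exact aux_rank_lt_iff (A (x : Fin N → ℂ))
    rw [hset]
    refine isClosed_iInter fun f => isClosed_iInter fun g => ?_
    exact isClosed_eq ((hminor f g).continuousOn.restrict) continuous_const
  · -- empty interior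
    by_contra hne
    obtain ⟨x₀, hx₀⟩ := Set.nonempty_iff_ne_empty.mpr hne
    set S := {x | x ∈ U ∧ (A x).rank < r} with hS
    have hvanish : ∀ x ∈ interior S, ∀ (f : Fin r → Fin p) (g : Fin r → Fin q),
        ((A x).submatrix f g).det = 0 := by
      intro x hx f g
      exact (aux_rank_lt_iff (A x)).mp (interior_subset hx).2 f g
    obtain ⟨y, hyU, hyr⟩ := hmax
    have hx₀U : x₀ ∈ U := (interior_subset hx₀).1
    obtain ⟨f, g, hfg⟩ := aux_exists_minor (A y) (le_of_eq hyr.symm)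
    have hzero : Set.EqOn (fun x => ((A x).submatrix f g).det) 0 U := by
      apply (hminor f g).eqOn_zero_of_preconnected_of_eventuallyEq_zero
        hUc.isPreconnected hx₀U
      filter_upwards [isOpen_interior.mem_nhds hx₀] with x hx
      exact hvanish x hx f g
    exact hfg (hzero hyU)
end
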